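/- Let p, q ≥ 1 be coprime integers with p + q ≥ 3 and let f = x^p·y^q ∈ ℂ[x,y]. Then for all natural numbers a, b, the class of the monomial x^a·y^b in the Brieskorn module B(f) = ℂ[x,y]/D_f is a torsion element annihilated by t if and only if p(b+1) ≠ q(a+1); that is, f·x^a·y^b ∈ D_f if and only if p(b+1) ≠ q(a+1). -/

import Mathlib

open MvPolynomial

section Aux
open MvPolynomial Finsupp

lemma coeff_pderiv {σ : Type*} [DecidableEq σ] (i : σ) (φ : MvPolynomial σ ℂ) (d : σ →₀ ℕ) :
    coeff d (pderiv i φ) = (d i + 1 : ℕ) * coeff (d + Finsupp.single i 1) φ := by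
  induction φ using MvPolynomial.induction_on' with
  | monomial s a =>
    rw [pderiv_monomial, coeff_monomial, coeff_monomial]
    by_cases hd : s = d + Finsupp.single i 1
    · subst hd
      rw [if_pos, if_pos rfl]
      · have h1 : (d + Finsupp.single i 1 : σ →₀ ℕ) i = d i + 1 := by simp
        rw [h1]; push_cast; ring
      · ext j; by_cases hj : j = i <;> simp [hj, Finsupp.single_apply]
    · rw [if_neg hd, mul_zero]
      by_cases h2 : s - Finsupp.single i 1 = d
      · rw [if_pos h2]
        rcases Nat.eq_zero_or_pos (s i) with h0 | hpos
        · rw [h0]; simp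
        · exfalso; apply hd
          ext j
          have := DFunLike.congr_fun h2 j
          simp only [Finsupp.coe_tsub, Pi.sub_apply, Finsupp.single_apply] at this
          by_cases hj : i = j
          · subst hj; simp at this ⊢; omega
          · simp only [Finsupp.add_apply, Finsupp.single_apply, if_neg hj] at this ⊢
            omega
      · rw [if_neg h2]
  | add f g hf hg => simp [hf, hg, mul_add]
open MvPolynomial

lemma key (P Q a b : ℕ) :
    pderiv (0 : Fin 2) (X 0 ^ (P+1) * X 1 ^ (Q+1) : MvPolynomial (Fin 2) ℂ) *
        pderiv 1 (X 0 ^ (a+1) * X 1 ^ (b+1))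
      - pderiv 1 (X 0 ^ (P+1) * X 1 ^ (Q+1)) * pderiv 0 (X 0 ^ (a+1) * X 1 ^ (b+1))
    = C ((((P+1)*(b+1) : ℕ) : ℂ) - (((Q+1)*(a+1) : ℕ) : ℂ)) *
        ((X 0 ^ (P+1) * X 1 ^ (Q+1)) * (X 0 ^ a * X 1 ^ b)) := by
  have h01 : (0 : Fin 2) ≠ 1 := by decide
  have h10 : (1 : Fin 2) ≠ 0 := by decide
  simp only [pderiv_mul, pderiv_pow, pderiv_X_self, pderiv_X_of_ne h01, pderiv_X_of_ne h10,
    mul_one, mul_zero, zero_mul, add_zero, zero_add, Nat.add_sub_cancel, map_sub, map_mul]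
  push_cast
  simp only [map_add, map_mul, map_one, map_natCast]
  ring

end Aux

/-- Membership in `D_f = {f_x·∂g/∂y − f_y·∂g/∂x : g ∈ ℂ[x,y]}`. -/
def Dmem (f w : MvPolynomial (Fin 2) ℂ) : Prop :=
  ∃ g : MvPolynomial (Fin 2) ℂ,
    w = pderiv 0 f * pderiv 1 g - pderiv 1 f * pderiv 0 g

/-- For `f = x^p y^q` with `p, q ≥ 1` coprime and `p + q ≥ 3`, the class of
the monomial `x^a y^b` in `B(f) = ℂ[x,y]/D_f` is annihilated by `t` (i.e.
`f·x^a y^b ∈ D_f`) iff `p(b+1) ≠ q(a+1)`. -/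
theorem statement11 (p q : ℕ) (hp : 1 ≤ p) (hq : 1 ≤ q) (hpq : Nat.Coprime p q)
    (hpq3 : 3 ≤ p + q) (a b : ℕ) :
    Dmem (X 0 ^ p * X 1 ^ q) ((X 0 ^ p * X 1 ^ q : MvPolynomial (Fin 2) ℂ) * (X 0 ^ a * X 1 ^ b))
      ↔ p * (b + 1) ≠ q * (a + 1) := by
  obtain ⟨P, rfl⟩ : ∃ P, p = P + 1 := ⟨p - 1, by omega⟩
  obtain ⟨Q, rfl⟩ : ∃ Q, q = Q + 1 := ⟨q - 1, by omega⟩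
  constructor
  · rintro ⟨g, hg⟩ heq
    set m : Fin 2 →₀ ℕ := Finsupp.single 0 (a+P+1) + Finsupp.single 1 (b+Q+1) with hm
    set s₁ : Fin 2 →₀ ℕ := Finsupp.single 0 P + Finsupp.single 1 (Q+1) with hs₁
    set s₂ : Fin 2 →₀ ℕ := Finsupp.single 0 (P+1) + Finsupp.single 1 Q with hs₂
    set t₁ : Fin 2 →₀ ℕ := Finsupp.single 0 (a+1) + Finsupp.single 1 b with ht₁
    set t₂ : Fin 2 →₀ ℕ := Finsupp.single 0 a + Finsupp.single 1 (b+1) with ht₂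
    set e : Fin 2 →₀ ℕ := Finsupp.single 0 (a+1) + Finsupp.single 1 (b+1) with he
    have hL : ((X 0 ^ (P+1) * X 1 ^ (Q+1) : MvPolynomial (Fin 2) ℂ) * (X 0 ^ a * X 1 ^ b))
        = monomial m 1 := by
      rw [X_pow_eq_monomial, X_pow_eq_monomial, X_pow_eq_monomial, X_pow_eq_monomial,
        monomial_mul, monomial_mul, monomial_mul]
      simp only [one_mul]
      exact congrArg (fun d => monomial d (1 : ℂ))
        (by ext j; fin_cases j <;> simp [hm, Finsupp.single_apply] <;> omega)
    have hf : (X 0 ^ (P+1) * X 1 ^ (Q+1) : MvPolynomial (Fin 2) ℂ)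
        = monomial (Finsupp.single 0 (P+1) + Finsupp.single 1 (Q+1)) 1 := by
      rw [X_pow_eq_monomial, X_pow_eq_monomial, monomial_mul, one_mul]
    have hx : pderiv (0 : Fin 2) (X 0 ^ (P+1) * X 1 ^ (Q+1) : MvPolynomial (Fin 2) ℂ)
        = monomial s₁ (((P+1 : ℕ)) : ℂ) := by
      rw [hf, pderiv_monomial,
        show (Finsupp.single 0 (P+1) + Finsupp.single 1 (Q+1) : Fin 2 →₀ ℕ) - Finsupp.single 0 1
          = s₁ from by ext j; fin_cases j <;> simp [hs₁, Finsupp.single_apply],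
        show ((1 : ℂ) * ((Finsupp.single 0 (P+1) + Finsupp.single 1 (Q+1) : Fin 2 →₀ ℕ) 0 : ℕ))
          = (((P+1 : ℕ)) : ℂ) from by simp [Finsupp.single_apply]]
    have hy : pderiv (1 : Fin 2) (X 0 ^ (P+1) * X 1 ^ (Q+1) : MvPolynomial (Fin 2) ℂ)
        = monomial s₂ (((Q+1 : ℕ)) : ℂ) := by
      rw [hf, pderiv_monomial,
        show (Finsupp.single 0 (P+1) + Finsupp.single 1 (Q+1) : Fin 2 →₀ ℕ) - Finsupp.single 1 1
          = s₂ from by ext j; fin_cases j <;> simp [hs₂, Finsupp.single_apply],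
        show ((1 : ℂ) * ((Finsupp.single 0 (P+1) + Finsupp.single 1 (Q+1) : Fin 2 →₀ ℕ) 1 : ℕ))
          = (((Q+1 : ℕ)) : ℂ) from by simp [Finsupp.single_apply]]
    have hm1 : m = s₁ + t₁ := by
      ext j; fin_cases j <;> simp [hm, hs₁, ht₁, Finsupp.single_apply] <;> omega
    have hm2 : m = s₂ + t₂ := by
      ext j; fin_cases j <;> simp [hm, hs₂, ht₂, Finsupp.single_apply] <;> omega
    have e1 : coeff m (monomial s₁ (((P+1 : ℕ)) : ℂ) * pderiv 1 g)
        = ((P+1 : ℕ) : ℂ) * (((b+1 : ℕ) : ℂ) * coeff e g) := by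
      rw [hm1, coeff_monomial_mul, _root_.coeff_pderiv]
      have h1 : t₁ 1 = b := by simp [ht₁, Finsupp.single_apply]
      have h2 : t₁ + Finsupp.single 1 1 = e := by
        ext j; fin_cases j <;> simp [ht₁, he, Finsupp.single_apply]
      rw [h1, h2]
    have e2 : coeff m (monomial s₂ (((Q+1 : ℕ)) : ℂ) * pderiv 0 g)
        = ((Q+1 : ℕ) : ℂ) * (((a+1 : ℕ) : ℂ) * coeff e g) := by
      rw [hm2, coeff_monomial_mul, _root_.coeff_pderiv]
      have h1 : t₂ 0 = a := by simp [ht₂, Finsupp.single_apply]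
      have h2 : t₂ + Finsupp.single 0 1 = e := by
        ext j; fin_cases j <;> simp [ht₂, he, Finsupp.single_apply] <;> omega
      rw [h1, h2]
    have hcong := congrArg (coeff m) hg
    rw [hL, coeff_monomial, if_pos rfl, coeff_sub, hx, hy, e1, e2] at hcong
    have hcast : (((P+1)*(b+1) : ℕ) : ℂ) = (((Q+1)*(a+1) : ℕ) : ℂ) := by exact_mod_cast heq
    have : (1 : ℂ) = 0 := by
      rw [hcong]
      push_cast at hcast ⊢
      linear_combination (coeff e g) * hcast
    exact one_ne_zero this
  · intro hne
    have hc0 : ((((P+1)*(b+1) : ℕ) : ℂ) - (((Q+1)*(a+1) : ℕ) : ℂ)) ≠ 0 :=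
      sub_ne_zero.mpr (fun h => hne (by exact_mod_cast h))
    refine ⟨C ((((P+1)*(b+1) : ℕ) : ℂ) - (((Q+1)*(a+1) : ℕ) : ℂ))⁻¹
      * (X 0 ^ (a+1) * X 1 ^ (b+1)), ?_⟩
    rw [pderiv_C_mul, pderiv_C_mul]
    have hCc : C ((((P+1)*(b+1) : ℕ) : ℂ) - (((Q+1)*(a+1) : ℕ) : ℂ))⁻¹
        * C ((((P+1)*(b+1) : ℕ) : ℂ) - (((Q+1)*(a+1) : ℕ) : ℂ))
        = (1 : MvPolynomial (Fin 2) ℂ) := by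
      rw [← C_mul, inv_mul_cancel₀ hc0, C_1]
    linear_combination (-(C ((((P+1)*(b+1) : ℕ) : ℂ) - (((Q+1)*(a+1) : ℕ) : ℂ))⁻¹)) * key P Q a b
      - (X 0 ^ (P+1) * X 1 ^ (Q+1) * (X 0 ^ a * X 1 ^ b)) * hCc
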